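/- Let F(x,λ) = λ³ − 20x·λ² + 8(8x² − 3x)·λ + 384x³. Then F(1,λ) = (λ−16)(λ−2(1−√7))(λ−2(1+√7)), so 16 is a root of F(1,·) of multiplicity one whose value strictly exceeds the modulus of every other root. Moreover, if δ > 0 and λ : (1−δ, 1+δ) → ℝ is twice differentiable with λ(1) = 16 and F(x, λ(x)) = 0 for all x ∈ (1−δ, 1+δ), then e := λ′(1)/16 = 6/7 and v := (−λ′(1)² + 16·λ″(1) + 16·λ′(1))/16² = 8/147 > 0. -/

import Mathlib

open Polynomial Set

theorem iterated_claw_genus_parameters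
    (F : ℝ → ℝ → ℝ)
    (hF : ∀ x l : ℝ, F x l = l ^ 3 - 20 * x * l ^ 2 + 8 * (8 * x ^ 2 - 3 * x) * l + 384 * x ^ 3)
    (Q : Polynomial ℂ)
    (hQ : Q = X ^ 3 - Polynomial.C 20 * X ^ 2 + Polynomial.C 40 * X + Polynomial.C 384) :
    (∀ l : ℝ, F 1 l =
      (l - 16) * (l - 2 * (1 - Real.sqrt 7)) * (l - 2 * (1 + Real.sqrt 7))) ∧
    Q.rootMultiplicity 16 = 1 ∧
    (∀ μ : ℂ, Q.eval μ = 0 → μ ≠ 16 → ‖μ‖ < 16) ∧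
    (∀ (δ : ℝ), 0 < δ → ∀ lam : ℝ → ℝ,
      (∀ x ∈ Set.Ioo (1 - δ) (1 + δ), DifferentiableAt ℝ lam x) →
      (∀ x ∈ Set.Ioo (1 - δ) (1 + δ), DifferentiableAt ℝ (deriv lam) x) →
      lam 1 = 16 →
      (∀ x ∈ Set.Ioo (1 - δ) (1 + δ), F x (lam x) = 0) →
      deriv lam 1 / 16 = 6 / 7 ∧
      (-(deriv lam 1) ^ 2 + 16 * deriv (deriv lam) 1 + 16 * deriv lam 1) / 16 ^ 2 = 8 / 147 ∧
      0 < (8 : ℝ) / 147) := by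
  have h7 : Real.sqrt 7 ^ 2 = 7 := Real.sq_sqrt (by norm_num)
  have hs7 : (0:ℝ) ≤ Real.sqrt 7 := Real.sqrt_nonneg 7
  have hs7lt : Real.sqrt 7 < 3 := by nlinarith
  -- factorization of Q
  have hQfact : Q = (X - C 16) * (X ^ 2 - C 4 * X - C 24) := by
    rw [hQ]
    apply Polynomial.funext
    intro z
    simp only [eval_add, eval_sub, eval_mul, eval_pow, eval_X, eval_C]
    ring
  refine ⟨?_, ?_, ?_, ?_⟩
  · intro l
    rw [hF]
    linear_combination 4 * (l - 16) * h7
  · have hq0 : (X ^ 2 - C 4 * X - C 24 : Polynomial ℂ) ≠ 0 := by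
      intro h
      have := congrArg (eval 0) h
      simp at this
    have hx0 : (X - C 16 : Polynomial ℂ) ≠ 0 := X_sub_C_ne_zero 16
    have hnr : ¬ (X ^ 2 - C 4 * X - C 24 : Polynomial ℂ).IsRoot 16 := by
      simp only [IsRoot, eval_sub, eval_mul, eval_pow, eval_X, eval_C]
      norm_num
    rw [hQfact, rootMultiplicity_mul (mul_ne_zero hx0 hq0),
      rootMultiplicity_X_sub_C_self, rootMultiplicity_eq_zero hnr]
  · intro μ hμ hne
    have h := hμ
    rw [hQfact] at h
    simp only [eval_mul, eval_sub, eval_pow, eval_X, eval_C] at h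
    have hsub : μ - 16 ≠ 0 := sub_ne_zero.mpr hne
    have hq : μ ^ 2 - 4 * μ - 24 = 0 := by
      rcases mul_eq_zero.mp h with h' | h'
      · exact absurd h' hsub
      · exact h'
    have h7c : ((Real.sqrt 7 : ℝ) : ℂ) ^ 2 = 7 := by
      rw [← Complex.ofReal_pow, h7]; norm_num
    have hfac : (μ - (2 + 2 * ((Real.sqrt 7 : ℝ) : ℂ))) *
        (μ - (2 - 2 * ((Real.sqrt 7 : ℝ) : ℂ))) = 0 := by
      linear_combination hq - 4 * h7c
    rcases mul_eq_zero.mp hfac with h' | h'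
    · have : μ = ((2 + 2 * Real.sqrt 7 : ℝ) : ℂ) := by
        push_cast; linear_combination h'
      rw [this, Complex.norm_real, Real.norm_eq_abs, abs_of_nonneg (by linarith)]
      linarith
    · have : μ = ((2 - 2 * Real.sqrt 7 : ℝ) : ℂ) := by
        push_cast; linear_combination h'
      rw [this, Complex.norm_real, Real.norm_eq_abs]
      rw [abs_sub_comm]
      rw [abs_of_nonneg (by nlinarith)]
      nlinarith
  · intro δ hδ lam hd1 hd2 hl1 hroot
    set I := Set.Ioo (1 - δ) (1 + δ) with hIdef
    have hIopen : IsOpen I := isOpen_Ioo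
    have h1I : (1 : ℝ) ∈ I := by
      constructor <;> simp <;> linarith
    set g : ℝ → ℝ := fun x => lam x ^ 3 - 20 * x * lam x ^ 2 +
      (64 * x ^ 2 - 24 * x) * lam x + 384 * x ^ 3 with hgdef
    have hg0 : ∀ x ∈ I, g x = 0 := by
      intro x hx
      have := hroot x hx
      rw [hF] at this
      rw [hgdef]
      simp only
      linarith [this]
    set g1 : ℝ → ℝ := fun x => 3 * lam x ^ 2 * deriv lam x -
      (20 * lam x ^ 2 + 40 * x * lam x * deriv lam x) +
      ((128 * x - 24) * lam x + (64 * x ^ 2 - 24 * x) * deriv lam x) +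
      1152 * x ^ 2 with hg1def
    have hderg : ∀ x ∈ I, HasDerivAt g (g1 x) x := by
      intro x hx
      have hl : HasDerivAt lam (deriv lam x) x := (hd1 x hx).hasDerivAt
      have hA : HasDerivAt (fun y => lam y ^ 3) (3 * lam x ^ 2 * deriv lam x) x := by
        simpa using hl.fun_pow 3
      have hB : HasDerivAt (fun y => 20 * y * lam y ^ 2)
          (20 * lam x ^ 2 + 20 * x * (2 * lam x * deriv lam x)) x := by
        have := (((hasDerivAt_id x).const_mul 20).fun_mul (by simpa using hl.fun_pow 2))
        simpa using this
      have hC1 : HasDerivAt (fun y : ℝ => 64 * y ^ 2 - 24 * y) (128 * x - 24) x := by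
        have := ((hasDerivAt_pow 2 x).const_mul 64).sub ((hasDerivAt_id x).const_mul 24)
        exact this.congr_deriv (by ring)
      have hC : HasDerivAt (fun y => (64 * y ^ 2 - 24 * y) * lam y)
          ((128 * x - 24) * lam x + (64 * x ^ 2 - 24 * x) * deriv lam x) x := hC1.mul hl
      have hD : HasDerivAt (fun y : ℝ => 384 * y ^ 3) (1152 * x ^ 2) x := by
        have := (hasDerivAt_pow 3 x).const_mul 384
        exact this.congr_deriv (by ring)
      have h := ((hA.sub hB).add hC).add hD
      exact h.congr_deriv (by simp only [hg1def]; ring)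
    have hg1zero : ∀ x ∈ I, g1 x = 0 := by
      intro x hx
      have hev : g =ᶠ[nhds x] (fun _ => (0 : ℝ)) :=
        Filter.eventuallyEq_of_mem (hIopen.mem_nhds hx) hg0
      have h1 : deriv g x = 0 := by
        rw [hev.deriv_eq]; simp
      have h2 : deriv g x = g1 x := (hderg x hx).deriv
      linarith [h1, h2]
    -- first equation
    have heq1 : deriv lam 1 = 96 / 7 := by
      have := hg1zero 1 h1I
      rw [hg1def] at this
      simp only at this
      rw [hl1] at this
      nlinarith [this]
    -- second derivative
    have hl : HasDerivAt lam (deriv lam 1) 1 := (hd1 1 h1I).hasDerivAt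
    have hm : HasDerivAt (deriv lam) (deriv (deriv lam) 1) 1 := (hd2 1 h1I).hasDerivAt
    have hE : HasDerivAt g1
        (6 * lam 1 * (deriv lam 1) ^ 2 + 3 * lam 1 ^ 2 * deriv (deriv lam) 1 -
          (80 * lam 1 * deriv lam 1 + 40 * (deriv lam 1) ^ 2 +
            40 * lam 1 * deriv (deriv lam) 1) +
          (128 * lam 1 + 208 * deriv lam 1 + 40 * deriv (deriv lam) 1) + 2304) 1 := by
      have hT1 : HasDerivAt (fun y => 3 * lam y ^ 2 * deriv lam y)
          ((3 * (2 * lam 1 * deriv lam 1)) * deriv lam 1 +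
            (3 * lam 1 ^ 2) * deriv (deriv lam) 1) 1 := by
        have hp : HasDerivAt (fun y => 3 * lam y ^ 2) (3 * (2 * lam 1 * deriv lam 1)) 1 := by
          have := (hl.pow 2).const_mul 3
          simpa using this
        exact hp.mul hm
      have hT2a : HasDerivAt (fun y => 20 * lam y ^ 2) (20 * (2 * lam 1 * deriv lam 1)) 1 := by
        have := (hl.pow 2).const_mul 20
        simpa using this
      have hT2b : HasDerivAt (fun y => 40 * y * lam y * deriv lam y)
          ((40 * lam 1 + 40 * 1 * deriv lam 1) * deriv lam 1 +
            (40 * 1 * lam 1) * deriv (deriv lam) 1) 1 := by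
        have h40 : HasDerivAt (fun y : ℝ => 40 * y) 40 1 := by
          simpa using (hasDerivAt_id (1:ℝ)).const_mul 40
        exact (h40.mul hl).mul hm
      have hT3a : HasDerivAt (fun y => (128 * y - 24) * lam y)
          (128 * lam 1 + (128 * 1 - 24) * deriv lam 1) 1 := by
        have h128 : HasDerivAt (fun y : ℝ => 128 * y - 24) 128 1 := by
          simpa using ((hasDerivAt_id (1:ℝ)).const_mul 128).sub_const 24
        exact h128.mul hl
      have hT3b : HasDerivAt (fun y => (64 * y ^ 2 - 24 * y) * deriv lam y)
          ((128 * 1 - 24) * deriv lam 1 + (64 * 1 ^ 2 - 24 * 1) * deriv (deriv lam) 1) 1 := by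
        have hC1 : HasDerivAt (fun y : ℝ => 64 * y ^ 2 - 24 * y) (128 * 1 - 24) 1 := by
          have := ((hasDerivAt_pow 2 (1:ℝ)).const_mul 64).sub ((hasDerivAt_id (1:ℝ)).const_mul 24)
          exact this.congr_deriv (by norm_num)
        exact hC1.mul hm
      have hT4 : HasDerivAt (fun y : ℝ => 1152 * y ^ 2) 2304 1 := by
        have := (hasDerivAt_pow 2 (1:ℝ)).const_mul 1152
        exact this.congr_deriv (by norm_num)
      have h := ((hT1.sub (hT2a.add hT2b)).add (hT3a.add hT3b)).add hT4
      exact h.congr_deriv (by ring)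
    have hEzero : (6 * lam 1 * (deriv lam 1) ^ 2 + 3 * lam 1 ^ 2 * deriv (deriv lam) 1 -
          (80 * lam 1 * deriv lam 1 + 40 * (deriv lam 1) ^ 2 +
            40 * lam 1 * deriv (deriv lam) 1) +
          (128 * lam 1 + 208 * deriv lam 1 + 40 * deriv (deriv lam) 1) + 2304) = 0 := by
      have hev : g1 =ᶠ[nhds 1] (fun _ => (0 : ℝ)) :=
        Filter.eventuallyEq_of_mem (hIopen.mem_nhds h1I) hg1zero
      have h1 : deriv g1 1 = 0 := by
        rw [hev.deriv_eq]; simp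
      have h2 := hE.deriv
      linarith [h1, h2]
    rw [hl1, heq1] at hEzero
    have heq2 : deriv (deriv lam) 1 = -160 / 147 := by
      nlinarith [hEzero]
    refine ⟨by rw [heq1]; norm_num, by rw [heq1, heq2]; norm_num, by norm_num⟩
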